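/- Let a ∈ [0,1], let Φ_a : M₂(ℂ) → M₂(ℂ) be the dephasing channel, let H = σ₃, let E ∈ ℝ, and let δ ∈ [0,2]. Then the supremum defining the Dobrushin curve F_E(δ) of Φ_a is unchanged when restricted to pairs whose second state lies in the (σ₁,σ₃)-plane: sup{‖Φ_a(ρ₀) − Φ_a(ρ₁)‖₁ : ρ₀, ρ₁ ∈ G_E, ‖ρ₀ − ρ₁‖₁ ≤ δ} = sup{‖Φ_a(ρ₀) − Φ_a(ρ₁)‖₁ : ρ₀, ρ₁ ∈ G_E, ‖ρ₀ − ρ₁‖₁ ≤ δ, tr(σ₂ρ₁) = 0}. -/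

import Mathlib

open scoped ComplexOrder
open Matrix

/-- The trace norm `‖A‖₁ = tr √(A†A)` of a complex matrix. -/
noncomputable def traceNorm {d : ℕ} (A : Matrix (Fin d) (Fin d) ℂ) : ℝ :=
  ((Matrix.posSemidef_conjTranspose_mul_self A).1.eigenvectorUnitary.1 *
    Matrix.diagonal ((fun x : ℝ => (x : ℂ)) ∘ (√·) ∘ (Matrix.posSemidef_conjTranspose_mul_self A).1.eigenvalues) *
    (star (Matrix.posSemidef_conjTranspose_mul_self A).1.eigenvectorUnitary :
      Matrix (Fin d) (Fin d) ℂ)).trace.re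

/-- A density matrix: positive semidefinite with unit trace. -/
def IsDensity {d : ℕ} (ρ : Matrix (Fin d) (Fin d) ℂ) : Prop :=
  ρ.PosSemidef ∧ ρ.trace = 1

/-- The Pauli matrix `σ₁`. -/
def pauli1 : Matrix (Fin 2) (Fin 2) ℂ := !![0, 1; 1, 0]

/-- The Pauli matrix `σ₂`. -/
def pauli2 : Matrix (Fin 2) (Fin 2) ℂ := !![0, -Complex.I; Complex.I, 0]

/-- The Pauli matrix `σ₃`. -/
def pauli3 : Matrix (Fin 2) (Fin 2) ℂ := !![1, 0; 0, -1]

/-- The dephasing channel with parameter `a`: the (complex-linear) map acting on the Pauli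
basis by `α₀I + α₁σ₁ + α₂σ₂ + α₃σ₃ ↦ α₀I + a(α₁σ₁ + α₂σ₂) + α₃σ₃`. -/
def IsDephasing (a : ℝ) (Φ : Matrix (Fin 2) (Fin 2) ℂ →ₗ[ℂ] Matrix (Fin 2) (Fin 2) ℂ) : Prop :=
  ∀ α : Fin 4 → ℝ,
    Φ ((α 0 : ℂ) • 1 + (α 1 : ℂ) • pauli1 + (α 2 : ℂ) • pauli2 + (α 3 : ℂ) • pauli3) =
      (α 0 : ℂ) • 1 + ((a : ℂ) * (α 1 : ℂ)) • pauli1 + ((a : ℂ) * (α 2 : ℂ)) • pauli2 +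
        (α 3 : ℂ) • pauli3

namespace Aux13

/-- diagonal phase matrix -/
def U (u : ℂ) : Matrix (Fin 2) (Fin 2) ℂ := !![u, 0; 0, 1]

lemma U_conjT (u : ℂ) : (U u)ᴴ = U (starRingEnd ℂ u) := by
  ext i j; fin_cases i <;> fin_cases j <;> simp [U, Matrix.conjTranspose_apply]

lemma conj_apply (u v : ℂ) (A : Matrix (Fin 2) (Fin 2) ℂ) :
    U u * A * U v = !![u * A 0 0 * v, u * A 0 1; A 1 0 * v, A 1 1] := by
  ext i j; fin_cases i <;> fin_cases j <;>
    simp [U, Matrix.mul_apply, Matrix.vecMul, dotProduct, Fin.sum_univ_two] <;> ring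

lemma entry10 {ρ : Matrix (Fin 2) (Fin 2) ℂ} (h : ρ.IsHermitian) :
    ρ 1 0 = starRingEnd ℂ (ρ 0 1) := by
  conv_lhs => rw [← h.eq]
  simp [Matrix.conjTranspose_apply]

lemma entry00_im {ρ : Matrix (Fin 2) (Fin 2) ℂ} (h : ρ.IsHermitian) : (ρ 0 0).im = 0 := by
  have : ρ 0 0 = starRingEnd ℂ (ρ 0 0) := by
    conv_lhs => rw [← h.eq]; simp [Matrix.conjTranspose_apply]
  exact Complex.conj_eq_iff_im.mp this.symm

lemma entry11_im {ρ : Matrix (Fin 2) (Fin 2) ℂ} (h : ρ.IsHermitian) : (ρ 1 1).im = 0 := by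
  have : ρ 1 1 = starRingEnd ℂ (ρ 1 1) := by
    conv_lhs => rw [← h.eq]; simp [Matrix.conjTranspose_apply]
  exact Complex.conj_eq_iff_im.mp this.symm

lemma phi_apply {a : ℝ} {Φ : Matrix (Fin 2) (Fin 2) ℂ →ₗ[ℂ] Matrix (Fin 2) (Fin 2) ℂ}
    (hΦ : IsDephasing a Φ) {ρ : Matrix (Fin 2) (Fin 2) ℂ} (hρ : ρ.IsHermitian) :
    Φ ρ = !![ρ 0 0, (a : ℂ) * ρ 0 1; (a : ℂ) * ρ 1 0, ρ 1 1] := by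
  have h10 := entry10 hρ
  have h00 := entry00_im hρ
  have h11 := entry11_im hρ
  set α : Fin 4 → ℝ := ![((ρ 0 0).re + (ρ 1 1).re)/2, (ρ 0 1).re, -(ρ 0 1).im,
    ((ρ 0 0).re - (ρ 1 1).re)/2] with hα
  have hdecomp : ρ = (α 0 : ℂ) • 1 + (α 1 : ℂ) • pauli1 + (α 2 : ℂ) • pauli2 +
      (α 3 : ℂ) • pauli3 := by
    ext i j; fin_cases i <;> fin_cases j <;>
      simp [hα, pauli1, pauli2, pauli3, Matrix.one_apply, h10, Complex.ext_iff] <;>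
      (try constructor) <;> (try simp [h00, h11]) <;> (try ring)
  rw [hdecomp, hΦ α]
  ext i j; fin_cases i <;> fin_cases j <;>
    simp [hα, pauli1, pauli2, pauli3, Matrix.one_apply, h10, Complex.ext_iff] <;>
    (try constructor) <;> (try simp [h00, h11]) <;> (try ring)

end Aux13

namespace Aux13

lemma herm_conj {ρ : Matrix (Fin 2) (Fin 2) ℂ} (hρ : ρ.IsHermitian) (u : ℂ) :
    (U u * ρ * U (starRingEnd ℂ u)).IsHermitian := by
  have : U (starRingEnd ℂ u) = (U u)ᴴ := (U_conjT u).symm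
  rw [this]
  exact Matrix.isHermitian_mul_mul_conjTranspose (U u) hρ

lemma phi_conj {a : ℝ} {Φ : Matrix (Fin 2) (Fin 2) ℂ →ₗ[ℂ] Matrix (Fin 2) (Fin 2) ℂ}
    (hΦ : IsDephasing a Φ) {ρ : Matrix (Fin 2) (Fin 2) ℂ} (hρ : ρ.IsHermitian) (u : ℂ) :
    Φ (U u * ρ * U (starRingEnd ℂ u)) = U u * Φ ρ * U (starRingEnd ℂ u) := by
  rw [phi_apply hΦ (herm_conj hρ u), phi_apply hΦ hρ, conj_apply, conj_apply]
  ext i j; fin_cases i <;> fin_cases j <;> simp <;> ring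

lemma psd_conj {ρ : Matrix (Fin 2) (Fin 2) ℂ} (hρ : ρ.PosSemidef) (u : ℂ) :
    (U u * ρ * U (starRingEnd ℂ u)).PosSemidef := by
  rw [show U (starRingEnd ℂ u) = (U u)ᴴ from (U_conjT u).symm]
  exact hρ.mul_mul_conjTranspose_same (U u)

lemma trace_conj {u : ℂ} (hu : u * starRingEnd ℂ u = 1) (A : Matrix (Fin 2) (Fin 2) ℂ) :
    (U u * A * U (starRingEnd ℂ u)).trace = A.trace := by
  rw [conj_apply]
  simp [Matrix.trace_fin_two]
  rw [mul_comm u (A 0 0), mul_assoc, hu, mul_one]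

lemma UU_one {u : ℂ} (hu : u * starRingEnd ℂ u = 1) :
    U (starRingEnd ℂ u) * U u = 1 := by
  ext i j; fin_cases i <;> fin_cases j <;>
    simp [U, Matrix.mul_apply, Fin.sum_univ_two, Matrix.one_apply]
  rw [mul_comm]; exact hu

open scoped MatrixOrder in
lemma traceNorm_conj {u : ℂ} (hu : u * starRingEnd ℂ u = 1) (A : Matrix (Fin 2) (Fin 2) ℂ) :
    traceNorm (U u * A * U (starRingEnd ℂ u)) = traceNorm A := by
  set v := starRingEnd ℂ u with hv
  set B := U u * A * U v with hB
  have hM := Matrix.posSemidef_conjTranspose_mul_self A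
  have hBM : Bᴴ * B = U u * (Aᴴ * A) * U v := by
    rw [hB]
    have : (U u * A * U v)ᴴ = U u * Aᴴ * U v := by
      rw [Matrix.conjTranspose_mul, Matrix.conjTranspose_mul, U_conjT, U_conjT, hv]
      simp [Matrix.mul_assoc]
    rw [this]
    calc U u * Aᴴ * U v * (U u * A * U v)
        = U u * Aᴴ * (U v * U u) * A * U v := by simp only [Matrix.mul_assoc]
      _ = U u * (Aᴴ * A) * U v := by rw [hv, UU_one hu]; simp only [Matrix.mul_one, Matrix.mul_assoc]
  have key : ∀ M : Matrix (Fin 2) (Fin 2) ℂ, traceNorm M = (CFC.sqrt (Mᴴ * M)).trace.re := by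
    intro M
    have hP := Matrix.posSemidef_conjTranspose_mul_self M
    rw [CFC.sqrt_eq_real_sqrt _ hP.nonneg, cfcₙ_eq_cfc (hf0 := by simp), hP.1.cfc_eq]
    unfold traceNorm
    simp [Matrix.IsHermitian.cfc]
  -- candidate square root
  have hC : (U u * CFC.sqrt (Aᴴ * A) * U v).PosSemidef := by
    rw [hv]; exact psd_conj (CFC.sqrt_nonneg _).posSemidef u
  have hsq : (U u * CFC.sqrt (Aᴴ * A) * U v) ^ 2 = Bᴴ * B := by
    rw [hBM, pow_two]
    calc U u * CFC.sqrt (Aᴴ * A) * U v * (U u * CFC.sqrt (Aᴴ * A) * U v)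
        = U u * CFC.sqrt (Aᴴ * A) * (U v * U u) * CFC.sqrt (Aᴴ * A) * U v := by simp only [Matrix.mul_assoc]
      _ = U u * (CFC.sqrt (Aᴴ * A) * CFC.sqrt (Aᴴ * A)) * U v := by rw [hv, UU_one hu]; simp only [Matrix.mul_one, Matrix.mul_assoc]
      _ = U u * (Aᴴ * A) * U v := by rw [CFC.sqrt_mul_sqrt_self _ hM.nonneg]
  have := CFC.sqrt_unique (a := Bᴴ * B) (b := U u * CFC.sqrt (Aᴴ * A) * U v)
    (by rw [← hsq, pow_two]) hC.nonneg
  rw [key, key, this, hv, trace_conj hu]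

end Aux13

namespace Aux13

lemma trace_mul_pauli3 (A : Matrix (Fin 2) (Fin 2) ℂ) :
    (A * pauli3).trace = A 0 0 - A 1 1 := by
  simp [pauli3, Matrix.trace_fin_two, Matrix.mul_apply, Fin.sum_univ_two]
  ring

lemma trace_pauli2_mul (A : Matrix (Fin 2) (Fin 2) ℂ) :
    (pauli2 * A).trace = Complex.I * (A 0 1 - A 1 0) := by
  simp [pauli2, Matrix.trace_fin_two, Matrix.mul_apply, Matrix.vecMul, dotProduct,
    Fin.sum_univ_two]
  ring

end Aux13

open Aux13

/-- For the dephasing channel with Hamiltonian `H = σ₃`, the supremum defining the Dobrushin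
curve `F_E(δ)` is unchanged when restricted to pairs whose second state lies in the
`(σ₁,σ₃)`-plane, i.e. satisfies `tr(σ₂ρ₁) = 0`. -/
theorem stmt_13 (a : ℝ) (ha : a ∈ Set.Icc (0 : ℝ) 1)
    (Φ : Matrix (Fin 2) (Fin 2) ℂ →ₗ[ℂ] Matrix (Fin 2) (Fin 2) ℂ) (hΦ : IsDephasing a Φ)
    (E : ℝ) (δ : ℝ) (hδ : δ ∈ Set.Icc (0 : ℝ) 2) :
    sSup {r | ∃ ρ₀ ρ₁ : Matrix (Fin 2) (Fin 2) ℂ, IsDensity ρ₀ ∧ IsDensity ρ₁ ∧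
        ((ρ₀ * pauli3).trace).re ≤ E ∧ ((ρ₁ * pauli3).trace).re ≤ E ∧
        traceNorm (ρ₀ - ρ₁) ≤ δ ∧ r = traceNorm (Φ ρ₀ - Φ ρ₁)} =
      sSup {r | ∃ ρ₀ ρ₁ : Matrix (Fin 2) (Fin 2) ℂ, IsDensity ρ₀ ∧ IsDensity ρ₁ ∧
        ((ρ₀ * pauli3).trace).re ≤ E ∧ ((ρ₁ * pauli3).trace).re ≤ E ∧
        traceNorm (ρ₀ - ρ₁) ≤ δ ∧ (pauli2 * ρ₁).trace = 0 ∧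
        r = traceNorm (Φ ρ₀ - Φ ρ₁)} := by
  congr 1
  ext r
  simp only [Set.mem_setOf_eq]
  constructor
  · rintro ⟨ρ₀, ρ₁, h0, h1, e0, e1, hd, hr⟩
    set z := ρ₁ 0 1 with hz_def
    set u : ℂ := if z = 0 then 1 else (starRingEnd ℂ z) / (‖z‖ : ℂ) with hu_def
    have hu : u * starRingEnd ℂ u = 1 := by
      rcases eq_or_ne z 0 with hz | hz
      · simp [hu_def, hz]
      · rw [hu_def, if_neg hz, map_div₀, Complex.conj_conj, Complex.conj_ofReal,
          div_mul_div_comm, mul_comm (starRingEnd ℂ z) z, Complex.mul_conj,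
          ← Complex.ofReal_mul, Complex.norm_mul_self_eq_normSq]
        rw [div_self]
        exact_mod_cast (Complex.normSq_pos.mpr hz).ne'
    have huz : u * z = (‖z‖ : ℂ) := by
      rcases eq_or_ne z 0 with hz | hz
      · simp [hz]
      · rw [hu_def, if_neg hz, div_mul_eq_mul_div, mul_comm (starRingEnd ℂ z) z,
          Complex.mul_conj, ← Complex.norm_mul_self_eq_normSq, Complex.ofReal_mul, mul_div_assoc,
          div_self (by exact_mod_cast (norm_ne_zero_iff.mpr hz)), mul_one]
    set V := U (starRingEnd ℂ u) with hV
    have hH0 : ρ₀.IsHermitian := h0.1.1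
    have hH1 : ρ₁.IsHermitian := h1.1.1
    refine ⟨U u * ρ₀ * V, U u * ρ₁ * V, ?_, ?_, ?_, ?_, ?_, ?_, ?_⟩
    · exact ⟨psd_conj h0.1 u, by rw [hV, trace_conj hu, h0.2]⟩
    · exact ⟨psd_conj h1.1 u, by rw [hV, trace_conj hu, h1.2]⟩
    · rw [hV, conj_apply, trace_mul_pauli3, mul_comm u (ρ₀ 0 0), mul_assoc, hu, mul_one]
      rw [trace_mul_pauli3] at e0
      exact e0
    · rw [hV, conj_apply, trace_mul_pauli3, mul_comm u (ρ₁ 0 0), mul_assoc, hu, mul_one]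
      rw [trace_mul_pauli3] at e1
      exact e1
    · have : U u * ρ₀ * V - U u * ρ₁ * V = U u * (ρ₀ - ρ₁) * V := by
        rw [Matrix.mul_sub, Matrix.sub_mul]
      rw [this, hV, traceNorm_conj hu]
      exact hd
    · rw [hV, trace_pauli2_mul, conj_apply]
      have h10 : ρ₁ 1 0 * starRingEnd ℂ u = starRingEnd ℂ (u * z) := by
        rw [entry10 hH1, ← hz_def, _root_.map_mul]; ring
      show Complex.I * (u * z - ρ₁ 1 0 * starRingEnd ℂ u) = 0
      rw [h10, huz, Complex.conj_ofReal, sub_self, mul_zero]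
    · rw [hr, hV, phi_conj hΦ hH0 u, phi_conj hΦ hH1 u]
      have : U u * Φ ρ₀ * U (starRingEnd ℂ u) - U u * Φ ρ₁ * U (starRingEnd ℂ u)
          = U u * (Φ ρ₀ - Φ ρ₁) * U (starRingEnd ℂ u) := by
        rw [Matrix.mul_sub, Matrix.sub_mul]
      rw [this, traceNorm_conj hu]
  · rintro ⟨ρ₀, ρ₁, h0, h1, e0, e1, hd, _, hr⟩
    exact ⟨ρ₀, ρ₁, h0, h1, e0, e1, hd, hr⟩
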